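/- Let E be a finite-dimensional real inner product space, and let S, X ⊆ E be nonempty compact subsets. Let Δ_S := {z ∈ E : ∃ p, q ∈ S, p ≠ q, ‖z − p‖ = ‖z − q‖ = d_S(z)} be the medial axis of S, where d_S(z) := inf_{p∈S} ‖z − p‖. Let ε : X → ℝ be a function satisfying: (i) for every x ∈ X and every z ∈ closure(Δ_S), ‖x − z‖ > 5·ε(x); (ii) for every x ∈ X, d_S(x) < ε(x)/3; (iii) for every p ∈ S there exists x ∈ X with ‖x − p‖ < ε(x)/4; (iv) for all distinct x, y ∈ X, |ε(x) − ε(y)| < ‖x − y‖/17. Set U(X, ε) := ⋃_{x ∈ X} B(x, ε(x)) (open balls in E). Then S ⊆ U(X, ε), every point of U(X, ε) has a unique nearest point π_S(u) in S, and the map H : U(X,ε) × [0,1] → E, H(u,t) := t·π_S(u) + (1−t)·u, takes values in U(X,ε), is continuous, and satisfies H(u,0) = u, H(u,1) = π_S(u) ∈ S, and H(p,t) = p for all p ∈ S; i.e., S is a deformation retract of U(X, ε). -/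

import Mathlib

/-- The medial axis of a set `S`: points having at least two distinct nearest points in `S`. -/
def medialAxis {E : Type*} [NormedAddCommGroup E] [InnerProductSpace ℝ E] (S : Set E) : Set E :=
  {x | ∃ p ∈ S, ∃ q ∈ S, p ≠ q ∧ ‖x - p‖ = Metric.infDist x S ∧ ‖x - q‖ = Metric.infDist x S}

private lemma helper_step (D h β ε' d₀ X : ℝ) (hd : 0 < d₀) (hD : d₀ ≤ D) (hh : 0 ≤ h)
    (hβ0 : 0 ≤ β) (hβh : β ≤ h) (hβd : β*d₀ = 2*h*ε') (hX : 0 ≤ X)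
    (hsq : (D+h)^2 - 2*h*ε' ≤ X^2) : D + h - β ≤ X := by
  have h1 : (D+h-β)^2 ≤ X^2 := by nlinarith [mul_nonneg hβ0 (sub_nonneg.mpr hD)]
  have h2 : 0 ≤ D + h - β := by linarith
  exact le_of_pow_le_pow_left₀ two_ne_zero hX h1

private lemma helper_ip (d₀ R μ nc np I : ℝ) (hμ : 0 < μ)
    (hsmall : 0 < d₀ + R - μ) (hnc0 : 0 ≤ nc) (hncR : nc ≤ R)
    (hnp : d₀ + R - μ ≤ np)
    (heq : np^2 = nc^2 + 2*I + d₀^2) : d₀*R - μ*(d₀+R) ≤ I := by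
  have h1 : (d₀ + R - μ)^2 ≤ np^2 := pow_le_pow_left₀ (le_of_lt hsmall) hnp 2
  have h2 : nc^2 ≤ R^2 := pow_le_pow_left₀ hnc0 hncR 2
  nlinarith

private lemma helper_bound (d₀ R μ δ Y : ℝ) (hd : 0 < d₀) (hR : 0 ≤ R) (hδ : 0 < δ)
    (hμ : 0 < μ) (hμ2 : μ ≤ δ^2*d₀/(16*(R+1)*(d₀+R+1)))
    (hY : Y ≤ 2*R*μ*(d₀+R)/d₀) : Y ≤ (δ/2)^2 := by
  have h16 : (0:ℝ) < 16*(R+1)*(d₀+R+1) := by positivity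
  have hμ2' : μ*(16*(R+1)*(d₀+R+1)) ≤ δ^2*d₀ := by
    rw [le_div_iff₀ h16] at hμ2
    linarith
  have hcomp : 2*R*(d₀+R) ≤ 2*(R+1)*(d₀+R+1) := by nlinarith
  have hstep : μ*(2*R*(d₀+R)) ≤ μ*(2*(R+1)*(d₀+R+1)) :=
    mul_le_mul_of_nonneg_left hcomp (le_of_lt hμ)
  have hfin : 2*R*μ*(d₀+R) ≤ (δ/2)^2*d₀ := by nlinarith
  calc Y ≤ 2*R*μ*(d₀+R)/d₀ := hY
    _ ≤ (δ/2)^2 := by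
        rw [div_le_iff₀ hd]
        linarith

set_option maxHeartbeats 1000000 in
private lemma alg_key (e r dx d w lam : ℝ) (he : 0 < e) (hr0 : 0 ≤ r) (hre : r < e)
    (hdx0 : 0 ≤ dx) (hdx : dx ≤ e/3) (hd0 : 0 < d) (hdw : d ≤ w) (hw : w ≤ r + dx)
    (hl0 : 0 ≤ lam) (hld : lam ≤ d) (hlkey : 23*lam ≤ 24*d + r - 17*e) :
    (5*e - r)*(r^2 - e^2) - lam*(d^2 + 2*d*(5*e-r) - w^2) + 2*lam*dx*(5*e-r)
      + lam^2*(5*e-r) < 0 := by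
  have hR : 0 < 5*e - r := by linarith
  have hL0 : 0 ≤ 24*d + r - 17*e := by linarith
  have hbase : (5*e-r)*(r^2 - e^2) < 0 :=
    mul_neg_of_pos_of_neg hR (by nlinarith : r^2 - e^2 < 0)
  have hgoal : (5*e - r)*(r^2 - e^2) - lam*(d^2 + 2*d*(5*e-r) - w^2) + 2*lam*dx*(5*e-r)
      + lam^2*(5*e-r)
      = (5*e-r)*(r^2-e^2) + lam*(w^2 - d^2 - 2*d*(5*e-r) + 2*dx*(5*e-r) + lam*(5*e-r)) := by
    ring
  rw [hgoal]
  set B : ℝ := w^2 - d^2 - 2*d*(5*e-r) + 2*dx*(5*e-r) + lam*(5*e-r) with hBdef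
  rcases le_or_gt B 0 with hB | hB
  · have : lam * B ≤ 0 := mul_nonpos_of_nonneg_of_nonpos hl0 hB
    linarith
  · set L : ℝ := 24*d + r - 17*e with hLdef
    have hlamL : lam ≤ L/23 := by rw [hLdef]; linarith
    set B' : ℝ := w^2 - d^2 - 2*d*(5*e-r) + 2*dx*(5*e-r) + (L/23)*(5*e-r) with hB'def
    have hBB' : B ≤ B' := by
      have : lam*(5*e-r) ≤ (L/23)*(5*e-r) := mul_le_mul_of_nonneg_right hlamL (le_of_lt hR)
      rw [hBdef, hB'def]; linarith
    have hB'pos : 0 < B' := lt_of_lt_of_le hB hBB'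
    have h1 : lam * B ≤ (L/23) * B' := by
      calc lam * B ≤ lam * B' := mul_le_mul_of_nonneg_left hBB' hl0
        _ ≤ (L/23) * B' := mul_le_mul_of_nonneg_right hlamL (le_of_lt hB'pos)
    have hd23 : 2*e/3 ≤ d := by
      have : 0 ≤ 24*d + r - 17*e := hL0
      linarith
    have hw0 : (0:ℝ) ≤ w := le_trans (le_of_lt hd0) hdw
    have hw' : w ≤ r + e/3 := by linarith
    have hre3 : 0 ≤ r + e/3 := by linarith
    have hwsq : w^2 ≤ (r + e/3)^2 := by nlinarith
    have hF3 : 529*((5*e-r)*(r^2-e^2))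
        + 23*L*((r+e/3)^2 - d^2 - 2*d*(5*e-r) + 2*(e/3)*(5*e-r)) + L^2*(5*e-r) < 0 := by
      have hid : -(529*((5*e-r)*(r^2-e^2))
          + 23*L*((r+e/3)^2 - d^2 - 2*d*(5*e-r) + 2*(e/3)*(5*e-r)) + L^2*(5*e-r))
          = (e-r)*(-507*r^2 + 1786*r*e + 550*r*d + (17417/9)*e^2 + 594*d*e + 505*d^2)
            + (d - 2*e/3)*(552*d^2 + 2112*d*e - (2752/3)*e^2) := by
        rw [hLdef]; ring
      have hp1 : 0 ≤ r*e - r*r := by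
        have := mul_le_mul_of_nonneg_left (le_of_lt hre) hr0
        linarith [this]
      have hp2 : 0 ≤ r*d := mul_nonneg hr0 (le_of_lt hd0)
      have hp3 : 0 ≤ d*e := mul_nonneg (le_of_lt hd0) (le_of_lt he)
      have hp4 : 0 < e*e := mul_pos he he
      have hQpos : 0 < -507*r^2 + 1786*r*e + 550*r*d + (17417/9)*e^2 + 594*d*e + 505*d^2 := by
        have hsq : 0 ≤ d^2 := sq_nonneg d
        nlinarith [hp1, hp2, hp3, hp4, hsq]
      have hterm1 : 0 < (e-r)*(-507*r^2 + 1786*r*e + 550*r*d + (17417/9)*e^2 + 594*d*e + 505*d^2) :=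
        mul_pos (by linarith) hQpos
      have ht1 : 0 ≤ d*(d - 2*e/3) := mul_nonneg (le_of_lt hd0) (by linarith)
      have ht2 : 0 ≤ e*(d - 2*e/3) := mul_nonneg (le_of_lt he) (by linarith)
      have hterm2 : 0 ≤ (d - 2*e/3)*(552*d^2 + 2112*d*e - (2752/3)*e^2) := by
        apply mul_nonneg (by linarith)
        nlinarith [ht1, ht2, hp4]
      linarith [hid.ge, hid.le, hterm1, hterm2]
    have h2 : 2*dx*(5*e-r) ≤ 2*(e/3)*(5*e-r) := by nlinarith
    have hsub : w^2 - d^2 - 2*d*(5*e-r) + 2*dx*(5*e-r)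
        ≤ (r+e/3)^2 - d^2 - 2*d*(5*e-r) + 2*(e/3)*(5*e-r) := by linarith [hwsq, h2]
    have hmul : 0 ≤ 23*L := by linarith
    have hBB'' : 23*L*B' ≤ 23*L*((r+e/3)^2 - d^2 - 2*d*(5*e-r) + 2*(e/3)*(5*e-r))
        + L^2*(5*e-r) := by
      have hsplit : 23*L*B' = 23*L*(w^2 - d^2 - 2*d*(5*e-r) + 2*dx*(5*e-r)) + L^2*(5*e-r) := by
        rw [hB'def]; ring
      rw [hsplit]
      have := mul_le_mul_of_nonneg_left hsub hmul
      linarith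
    have hfin : (5*e-r)*(r^2-e^2) + (L/23) * B' < 0 := by
      have hq : (L/23)*B' = (23*L*B')/529 := by ring
      rw [hq]
      linarith [hF3, hBB'']
    linarith [h1, hfin]

private lemma proj_continuousOn {E : Type*} [NormedAddCommGroup E] [InnerProductSpace ℝ E]
    [FiniteDimensional ℝ E] (S : Set E) (hS : IsCompact S) (U : Set E)
    (hnear : ∀ u ∈ U, ∃! p, p ∈ S ∧ ‖u - p‖ = Metric.infDist u S)
    (π : E → E) (hπ : ∀ u ∈ U, π u ∈ S ∧ ‖u - π u‖ = Metric.infDist u S) :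
    ContinuousOn π U := by
  rw [Metric.continuousOn_iff]
  intro u hu ε₀ hε₀
  by_contra hcon
  push_neg at hcon
  have hex : ∀ n : ℕ, ∃ a, a ∈ U ∧ dist a u < 1/(n+1) ∧ ε₀ ≤ dist (π a) (π u) := by
    intro n
    obtain ⟨a, haU, h1', h2'⟩ := hcon (1/(n+1)) (by positivity)
    exact ⟨a, haU, h1', h2'⟩
  choose v hvU hvd hvf using hex
  obtain ⟨q, hqS, φ, hφ, hconv⟩ := hS.tendsto_subseq (fun n => (hπ (v n) (hvU n)).1)
  have hvtend : Filter.Tendsto (fun n => v (φ n)) Filter.atTop (nhds u) := by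
    rw [tendsto_iff_dist_tendsto_zero]
    have hb : ∀ n : ℕ, dist (v (φ n)) u ≤ 1/((n:ℝ)+1) := by
      intro n
      have h1' := (hvd (φ n)).le
      have h2' : (1:ℝ)/((φ n : ℝ)+1) ≤ 1/((n:ℝ)+1) := by
        apply one_div_le_one_div_of_le (by positivity)
        have := hφ.le_apply (x := n)
        have : (n:ℝ) ≤ (φ n : ℝ) := by exact_mod_cast this
        linarith
      linarith
    exact squeeze_zero (fun n => dist_nonneg) hb tendsto_one_div_add_atTop_nhds_zero_nat
  have hdist1 : Filter.Tendsto (fun n => dist (v (φ n)) (π (v (φ n)))) Filter.atTop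
      (nhds (dist u q)) := hvtend.dist hconv
  have heq : ∀ n, dist (v (φ n)) (π (v (φ n))) = Metric.infDist (v (φ n)) S := by
    intro n; rw [dist_eq_norm]; exact (hπ _ (hvU (φ n))).2
  simp only [heq] at hdist1
  have hdist2 : Filter.Tendsto (fun n => Metric.infDist (v (φ n)) S) Filter.atTop
      (nhds (Metric.infDist u S)) :=
    ((Metric.continuous_infDist_pt S).tendsto u).comp hvtend
  have hduq : dist u q = Metric.infDist u S := tendsto_nhds_unique hdist1 hdist2
  have hqnear : q ∈ S ∧ ‖u - q‖ = Metric.infDist u S := ⟨hqS, by rw [← dist_eq_norm]; exact hduq⟩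
  obtain ⟨p₀, hp₀, hup₀⟩ := hnear u hu
  have hqπ : q = π u := by rw [hup₀ q hqnear, hup₀ (π u) (hπ u hu)]
  have hlim : Filter.Tendsto (fun n => dist (π (v (φ n))) (π u)) Filter.atTop
      (nhds (dist q (π u))) := hconv.dist tendsto_const_nhds
  have : ε₀ ≤ dist q (π u) :=
    ge_of_tendsto hlim (Filter.Eventually.of_forall fun n => hvf (φ n))
  rw [hqπ, dist_self] at this
  linarith

set_option maxHeartbeats 1600000 in
private lemma march {E : Type*} [NormedAddCommGroup E] [InnerProductSpace ℝ E]
    [FiniteDimensional ℝ E] (S : Set E) (hS : IsCompact S) (hSne : S.Nonempty)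
    (c : E) (R : ℝ) (hR : 0 ≤ R)
    (huniq : ∀ z ∈ Metric.closedBall c R, ∃! p, p ∈ S ∧ ‖z - p‖ = Metric.infDist z S)
    (p : E) (hp : p ∈ S) (hpc : ‖c - p‖ = Metric.infDist c S) (hd : 0 < Metric.infDist c S) :
    ∀ m ∈ S, Metric.infDist c S + R ≤ ‖(c + (R / Metric.infDist c S) • (c - p)) - m‖ := by
  classical
  set d₀ : ℝ := Metric.infDist c S with hd₀
  have hsel : ∀ z : E, ∃ q, q ∈ S ∧ ‖z - q‖ = Metric.infDist z S := by
    intro z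
    obtain ⟨q, hq, hq2⟩ := hS.exists_infDist_eq_dist hSne z
    exact ⟨q, hq, by rw [← dist_eq_norm]; exact hq2.symm⟩
  set π : E → E := fun z => (hsel z).choose with hπdef
  have hπS : ∀ z, π z ∈ S := fun z => (hsel z).choose_spec.1
  have hπd : ∀ z, ‖z - π z‖ = Metric.infDist z S := fun z => (hsel z).choose_spec.2
  set K := Metric.closedBall c R with hK
  have hKcpt : IsCompact K := isCompact_closedBall c R
  have hcont : ContinuousOn π K :=
    proj_continuousOn S hS K huniq π (fun z _ => ⟨hπS z, hπd z⟩)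
  have hucont : UniformContinuousOn π K := hKcpt.uniformContinuousOn_of_continuous hcont
  rw [Metric.uniformContinuousOn_iff] at hucont
  intro m hm
  have happrox : ∀ δ : ℝ, 0 < δ → d₀ + R - δ ≤ ‖(c + (R / d₀) • (c - p)) - m‖ := by
    intro δ hδ
    rcases le_or_gt (d₀ + R) δ with hbig | hsmall
    · have : (0:ℝ) ≤ ‖(c + (R / d₀) • (c - p)) - m‖ := norm_nonneg _
      linarith
    set μ : ℝ := min (δ/2) (δ^2*d₀/(16*(R+1)*(d₀+R+1))) with hμdef
    have hμpos : 0 < μ := by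
      apply lt_min (by linarith)
      positivity
    have hμ1 : μ ≤ δ/2 := min_le_left _ _
    have hμ2 : μ ≤ δ^2*d₀/(16*(R+1)*(d₀+R+1)) := min_le_right _ _
    set ε' : ℝ := min (μ*d₀/(2*(R+1))) (d₀/2) with hε'def
    have hε'pos : 0 < ε' := by
      apply lt_min
      · positivity
      · linarith
    have hε'1 : ε' ≤ μ*d₀/(2*(R+1)) := min_le_left _ _
    have hε'2 : ε' ≤ d₀/2 := min_le_right _ _
    obtain ⟨η, hη, hηspec⟩ := hucont ε' hε'pos
    obtain ⟨N0, hN0⟩ := exists_nat_gt (R/η)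
    set N : ℕ := N0 + 1 with hN
    have hNpos : 0 < (N:ℝ) := by positivity
    set h : ℝ := R / N with hh
    have hh0 : 0 ≤ h := div_nonneg hR (le_of_lt hNpos)
    have hNh : (N:ℝ) * h = R := by rw [hh]; field_simp
    have hhη : h < η := by
      rw [hh, div_lt_iff₀ hNpos]
      have hRη : R/η < (N:ℝ) := by
        have h1 : (N0:ℝ) < (N:ℝ) := by exact_mod_cast Nat.lt_succ_self N0
        linarith
      calc R = (R/η)*η := by field_simp
        _ < (N:ℝ)*η := mul_lt_mul_of_pos_right hRη hη
        _ = η * (N:ℝ) := by ring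
    set β : ℝ := 2*h*ε'/d₀ with hβdef
    have hβ0 : 0 ≤ β := by positivity
    have hβh : β ≤ h := by
      rw [hβdef, div_le_iff₀ hd]
      nlinarith
    have hβd₀ : β * d₀ = 2*h*ε' := by rw [hβdef]; field_simp
    set z : ℕ → E := fun k =>
      Nat.rec c (fun _ zk => zk + (h / Metric.infDist zk S) • (zk - π zk)) k with hzdef
    have hz0 : z 0 = c := rfl
    have hzsucc : ∀ k, z (k+1) = z k + (h / Metric.infDist (z k) S) • (z k - π (z k)) :=
      fun k => rfl
    have inv : ∀ k : ℕ, k ≤ N → ‖z k - c‖ ≤ k*h ∧ d₀ + k*(h - β) ≤ Metric.infDist (z k) S := by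
      intro k
      induction k with
      | zero => intro _; simp [hz0, hd₀]
      | succ k ih =>
          intro hkN
          have hkN' : k ≤ N := le_of_lt (Nat.lt_of_succ_le hkN)
          obtain ⟨ih1, ih2⟩ := ih hkN'
          have hk0 : (0:ℝ) ≤ (k:ℝ)*(h-β) := mul_nonneg (Nat.cast_nonneg k) (by linarith)
          have hkh_le : (k:ℝ)*h ≤ (N:ℝ)*h :=
            mul_le_mul_of_nonneg_right (by exact_mod_cast hkN') hh0
          have hzkK : z k ∈ K := by
            rw [hK, Metric.mem_closedBall, dist_eq_norm]
            calc ‖z k - c‖ ≤ k*h := ih1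
              _ ≤ (N:ℝ)*h := hkh_le
              _ = R := hNh
          have hD : 0 < Metric.infDist (z k) S := by linarith
          set D := Metric.infDist (z k) S with hDdef
          have hDd₀ : d₀ ≤ D := by linarith
          have hnormstep : ‖z (k+1) - z k‖ = h := by
            rw [hzsucc k]
            simp only [add_sub_cancel_left]
            rw [norm_smul, Real.norm_eq_abs, abs_div, abs_of_nonneg hh0, abs_of_pos hD,
              hπd (z k)]
            field_simp
            rw [hDdef]
          have htri : ‖z (k+1) - c‖ ≤ ‖z (k+1) - z k‖ + ‖z k - c‖ :=
            norm_sub_le_norm_sub_add_norm_sub _ _ _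
          have hnext_norm : ‖z (k+1) - c‖ ≤ ((k:ℝ)+1)*h := by
            rw [hnormstep] at htri
            have hq9 : ((k:ℝ)+1)*h = h + (k:ℝ)*h := by ring
            rw [hq9]
            linarith
          have hzk1K : z (k+1) ∈ K := by
            rw [hK, Metric.mem_closedBall, dist_eq_norm]
            calc ‖z (k+1) - c‖ ≤ ((k:ℝ)+1)*h := hnext_norm
              _ ≤ (N:ℝ)*h := mul_le_mul_of_nonneg_right (by exact_mod_cast hkN) hh0
              _ = R := hNh
          refine ⟨by push_cast; linarith, ?_⟩
          have hqq' : dist (π (z k)) (π (z (k+1))) < ε' := by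
            apply hηspec (z k) hzkK (z (k+1)) hzk1K
            rw [dist_eq_norm, ← norm_neg, neg_sub, hnormstep]
            exact hhη
          set q := π (z k) with hq
          set q' := π (z (k+1)) with hq'
          have hq'S : q' ∈ S := hπS _
          have hzq : ‖z k - q‖ = D := hπd (z k)
          have hzq' : ‖z (k+1) - q'‖ = Metric.infDist (z (k+1)) S := hπd (z (k+1))
          have hlow : D ≤ ‖z k - q'‖ := by
            rw [hDdef, ← dist_eq_norm]
            exact Metric.infDist_le_dist_of_mem hq'S
          have hexp : ‖z (k+1) - q'‖^2 = ‖z k - q'‖^2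
              + 2*(h/D)*(inner ℝ (z k - q') (z k - q) : ℝ) + (h/D)^2*D^2 := by
            have hrw : z (k+1) - q' = (z k - q') + (h/D) • (z k - q) := by
              rw [hzsucc k]; abel
            rw [hrw, norm_add_sq_real, real_inner_smul_right, norm_smul, Real.norm_eq_abs,
              abs_div, abs_of_nonneg hh0, abs_of_pos hD, hzq]
            ring
          have hinner : D^2 - ε'*D ≤ (inner ℝ (z k - q') (z k - q) : ℝ) := by
            have hsplit : z k - q' = (z k - q) + (q - q') := by abel
            rw [hsplit, inner_add_left]
            have h1 : (inner ℝ (z k - q) (z k - q) : ℝ) = D^2 := by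
              rw [real_inner_self_eq_norm_sq, hzq]
            have h2 : |(inner ℝ (q - q') (z k - q) : ℝ)| ≤ ‖q - q'‖ * ‖z k - q‖ :=
              abs_real_inner_le_norm _ _
            have h3 : ‖q - q'‖ ≤ ε' := by
              rw [← dist_eq_norm]; exact le_of_lt hqq'
            have h4 : ‖q - q'‖ * ‖z k - q‖ ≤ ε' * D := by
              rw [hzq]
              exact mul_le_mul_of_nonneg_right h3 (le_of_lt hD)
            have h5 : -(ε'*D) ≤ (inner ℝ (q - q') (z k - q) : ℝ) := by
              have h6 := (abs_le.mp (le_trans h2 h4)).1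
              linarith
            linarith
          have hsqbound : (D+h)^2 - 2*h*ε' ≤ ‖z (k+1) - q'‖^2 := by
            have hco : (0:ℝ) ≤ 2*(h/D) := by positivity
            have hmul := mul_le_mul_of_nonneg_left hinner hco
            have hmid : 2*(h/D)*(D^2 - ε'*D) = 2*h*D - 2*h*ε' := by
              field_simp
            have hfrac : (h/D)^2*D^2 = h^2 := by field_simp
            have hD2 : D^2 ≤ ‖z k - q'‖^2 := pow_le_pow_left₀ (le_of_lt hD) hlow 2
            rw [hmid] at hmul
            have hexpand : (D+h)^2 = D^2 + 2*h*D + h^2 := by ring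
            rw [hexp, hfrac, hexpand]
            linarith
          have hfinal : D + h - β ≤ Metric.infDist (z (k+1)) S := by
            rw [← hzq']
            exact helper_step D h β ε' d₀ _ hd hDd₀ hh0 hβ0 hβh hβd₀ (norm_nonneg _) hsqbound
          have hlast : d₀ + ((k:ℝ)+1)*(h-β) ≤ D + (h - β) := by
            have hq8 : d₀ + ((k:ℝ)+1)*(h-β) = (d₀ + (k:ℝ)*(h-β)) + (h-β) := by ring
            rw [hq8]
            linarith
          push_cast
          push_cast at hlast
          linarith
    obtain ⟨hfin1, hfin2⟩ := inv N (le_refl N)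
    have hNβ : (N:ℝ)*β ≤ μ := by
      have hcalc : (N:ℝ)*β = 2*R*ε'/d₀ := by
        rw [hβdef]
        have h9 : (N:ℝ)*(2*h*ε'/d₀) = 2*((N:ℝ)*h)*ε'/d₀ := by ring
        rw [h9, hNh]
      rw [hcalc, div_le_iff₀ hd]
      have h1 : 2*R*ε' ≤ 2*R*(μ*d₀/(2*(R+1))) :=
        mul_le_mul_of_nonneg_left hε'1 (by linarith)
      have h2 : 2*R*(μ*d₀/(2*(R+1))) ≤ μ*d₀ := by
        have hpos : (0:ℝ) < 2*(R+1) := by linarith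
        rw [show 2*R*(μ*d₀/(2*(R+1))) = (μ*d₀)*(2*R/(2*(R+1))) by ring]
        have hfr : 2*R/(2*(R+1)) ≤ 1 := by
          rw [div_le_one hpos]; linarith
        have hμd : 0 ≤ μ*d₀ := by positivity
        nlinarith
      linarith
    have hzN : d₀ + R - μ ≤ Metric.infDist (z N) S := by
      have h9 : (N:ℝ)*(h-β) = R - (N:ℝ)*β := by rw [mul_sub, hNh]
      rw [h9] at hfin2
      linarith
    have hzNc : ‖z N - c‖ ≤ R := by rw [← hNh]; exact hfin1
    set P := c + (R / d₀) • (c - p) with hP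
    have hμsmall : 0 < d₀ + R - μ := by linarith
    have hzNp : d₀ + R - μ ≤ ‖z N - p‖ := by
      refine le_trans hzN ?_
      rw [← dist_eq_norm]
      exact Metric.infDist_le_dist_of_mem hp
    have hip : d₀*R - μ*(d₀+R) ≤ (inner ℝ (z N - c) (c - p) : ℝ) := by
      have hexp2 : ‖z N - p‖^2 = ‖z N - c‖^2 + 2*(inner ℝ (z N - c) (c - p) : ℝ) + d₀^2 := by
        have hrw : z N - p = (z N - c) + (c - p) := by abel
        rw [hrw, norm_add_sq_real, hpc]
      exact helper_ip d₀ R μ _ _ _ hμpos hμsmall (norm_nonneg _) hzNc hzNp hexp2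
    have hPz2 : ‖z N - P‖^2 ≤ 2*R*μ*(d₀+R)/d₀ := by
      have hrw : z N - P = (z N - c) - (R/d₀) • (c - p) := by rw [hP]; abel
      have hexp3 : ‖z N - P‖^2 = ‖z N - c‖^2 - 2*(R/d₀)*(inner ℝ (z N - c) (c - p) : ℝ)
          + (R/d₀)^2*d₀^2 := by
        rw [hrw, norm_sub_sq_real, real_inner_smul_right, norm_smul, Real.norm_eq_abs,
          abs_div, abs_of_nonneg hR, abs_of_pos hd, hpc]
        ring
      have hRd : (R/d₀)^2*d₀^2 = R^2 := by field_simp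
      have hco : (0:ℝ) ≤ 2*(R/d₀) := by positivity
      have h1 := mul_le_mul_of_nonneg_left hip hco
      have h2 : 2*(R/d₀)*(d₀*R - μ*(d₀+R)) = 2*R^2 - 2*R*μ*(d₀+R)/d₀ := by
        field_simp
      have hnc2 : ‖z N - c‖^2 ≤ R^2 := pow_le_pow_left₀ (norm_nonneg _) hzNc 2
      rw [hexp3, hRd]
      rw [h2] at h1
      linarith
    have hPz : ‖z N - P‖ ≤ δ/2 := by
      have hb := helper_bound d₀ R μ δ (‖z N - P‖^2) hd hR hδ hμpos hμ2 hPz2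
      exact le_of_pow_le_pow_left₀ two_ne_zero (by linarith) hb
    have htri2 : ‖z N - m‖ ≤ ‖z N - P‖ + ‖P - m‖ := norm_sub_le_norm_sub_add_norm_sub _ _ _
    have hm2 : d₀ + R - μ ≤ ‖z N - m‖ := by
      refine le_trans hzN ?_
      rw [← dist_eq_norm]
      exact Metric.infDist_le_dist_of_mem hm
    linarith
  by_contra hcon
  push_neg at hcon
  have hpos : 0 < (d₀ + R - ‖(c + (R / d₀) • (c - p)) - m‖)/2 := by linarith
  have := happrox _ hpos
  linarith

set_option maxHeartbeats 4000000 in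
theorem stmt_9 {E : Type*} [NormedAddCommGroup E] [InnerProductSpace ℝ E]
    [FiniteDimensional ℝ E] (S X : Set E)
    (hS : IsCompact S) (hSne : S.Nonempty) (hX : IsCompact X) (hXne : X.Nonempty)
    (ε : E → ℝ)
    (h1 : ∀ x ∈ X, ∀ z ∈ closure (medialAxis S), 5 * ε x < ‖x - z‖)
    (h2 : ∀ x ∈ X, Metric.infDist x S < ε x / 3)
    (h3 : ∀ p ∈ S, ∃ x ∈ X, ‖x - p‖ < ε x / 4)
    (h4 : ∀ x ∈ X, ∀ y ∈ X, x ≠ y → |ε x - ε y| < ‖x - y‖ / 17)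
    (U : Set E) (hU : U = ⋃ x ∈ X, Metric.ball x (ε x)) :
    S ⊆ U ∧
    (∀ u ∈ U, ∃! p, p ∈ S ∧ ‖u - p‖ = Metric.infDist u S) ∧
    ∀ π : E → E, (∀ u ∈ U, π u ∈ S ∧ ‖u - π u‖ = Metric.infDist u S) →
      (∀ u ∈ U, ∀ t ∈ Set.Icc (0:ℝ) 1, t • π u + (1 - t) • u ∈ U) ∧
      ContinuousOn (fun p : E × ℝ => p.2 • π p.1 + (1 - p.2) • p.1)
        (U ×ˢ Set.Icc (0:ℝ) 1) ∧
      (∀ u ∈ U, (0:ℝ) • π u + (1 - (0:ℝ)) • u = u ∧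
        (1:ℝ) • π u + (1 - (1:ℝ)) • u = π u ∧ π u ∈ S) ∧
      (∀ p ∈ S, ∀ t ∈ Set.Icc (0:ℝ) 1, t • π p + (1 - t) • p = p) := by
  have hεpos : ∀ x ∈ X, 0 < ε x := by
    intro x hx
    have h := h2 x hx
    have h0 : (0:ℝ) ≤ Metric.infDist x S := Metric.infDist_nonneg
    linarith
  have hSU : S ⊆ U := by
    intro p hp
    obtain ⟨x, hxX, hxp⟩ := h3 p hp
    rw [hU]
    refine Set.mem_iUnion₂.mpr ⟨x, hxX, ?_⟩
    rw [Metric.mem_ball, dist_comm, dist_eq_norm]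
    have := hεpos x hxX
    linarith
  have hfar : ∀ x ∈ X, ∀ z : E, ‖x - z‖ ≤ 5 * ε x → z ∉ closure (medialAxis S) := by
    intro x hx z hz hcl
    have := h1 x hx z hcl
    linarith
  have huniq : ∀ z : E, z ∉ closure (medialAxis S) →
      ∃! p, p ∈ S ∧ ‖z - p‖ = Metric.infDist z S := by
    intro z hz
    obtain ⟨p, hpS, hpd⟩ := hS.exists_infDist_eq_dist hSne z
    refine ⟨p, ⟨hpS, by rw [← dist_eq_norm]; exact hpd.symm⟩, ?_⟩
    rintro q ⟨hqS, hq⟩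
    by_contra hne
    exact hz (subset_closure
      ⟨q, hqS, p, hpS, hne, hq, by rw [← dist_eq_norm]; exact hpd.symm⟩)
  have hnear : ∀ u ∈ U, ∃! p, p ∈ S ∧ ‖u - p‖ = Metric.infDist u S := by
    intro u huU
    rw [hU] at huU
    obtain ⟨x, hxX, hx⟩ := Set.mem_iUnion₂.mp huU
    rw [Metric.mem_ball] at hx
    refine huniq u (hfar x hxX u ?_)
    rw [dist_comm, dist_eq_norm] at hx
    have := hεpos x hxX
    linarith
  refine ⟨hSU, hnear, ?_⟩
  intro π hπ
  have hπcont : ContinuousOn π U := proj_continuousOn S hS U hnear π hπ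
  have hπfix : ∀ p ∈ S, π p = p := by
    intro p hp
    have h := (hπ p (hSU hp)).2
    rw [Metric.infDist_zero_of_mem hp, norm_eq_zero, sub_eq_zero] at h
    exact h.symm
  have hseg : ∀ u ∈ U, ∀ t ∈ Set.Icc (0:ℝ) 1, t • π u + (1 - t) • u ∈ U := by
    intro u huU t ht
    obtain ⟨ht0, ht1⟩ := ht
    have huU' := huU
    rw [hU] at huU'
    obtain ⟨x, hxX, hxball⟩ := Set.mem_iUnion₂.mp huU'
    rw [Metric.mem_ball] at hxball
    have hepos : 0 < ε x := hεpos x hxX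
    have hre : ‖u - x‖ < ε x := by rw [← dist_eq_norm]; exact hxball
    have hpS : π u ∈ S := (hπ u huU).1
    have hpd : ‖u - π u‖ = Metric.infDist u S := (hπ u huU).2
    have hd0 : 0 ≤ Metric.infDist u S := Metric.infDist_nonneg
    obtain ⟨y, hyX, hyp⟩ := h3 (π u) hpS
    have heypos : 0 < ε y := hεpos y hyX
    have hwp : t • π u + (1 - t) • u - π u = (1-t) • (u - π u) := by
      module
    have hwx : t • π u + (1 - t) • u - x = (u - x) - t • (u - π u) := by
      module
    have hwpnorm : ‖t • π u + (1 - t) • u - π u‖ = (1-t) * Metric.infDist u S := by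
      rw [hwp, norm_smul, Real.norm_eq_abs, abs_of_nonneg (by linarith), hpd]
    rcases lt_or_ge ((1-t) * Metric.infDist u S) (3/4*(ε y)) with hcase | hcase
    · rw [hU]
      refine Set.mem_iUnion₂.mpr ⟨y, hyX, ?_⟩
      rw [Metric.mem_ball, dist_eq_norm]
      have htri : ‖t • π u + (1 - t) • u - y‖ ≤ ‖t • π u + (1 - t) • u - π u‖ + ‖π u - y‖ :=
        norm_sub_le_norm_sub_add_norm_sub _ _ _
      have hpy : ‖π u - y‖ < ε y / 4 := by rw [norm_sub_rev]; exact hyp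
      rw [hwpnorm] at htri
      linarith
    · -- the x-ball covers the point
      set e := ε x with he
      set r : ℝ := ‖u - x‖ with hr
      set d : ℝ := Metric.infDist u S with hd
      have hdpos : 0 < d := by
        rcases le_or_gt d 0 with h' | h'
        · exfalso
          have h1t : (1-t) * d ≤ 0 := mul_nonpos_of_nonneg_of_nonpos (by linarith) h'
          linarith
        · exact h'
      set R : ℝ := 5*e - r with hRdef
      have hR0 : (0:ℝ) ≤ R := by
        rw [hRdef]
        have : 0 ≤ r := norm_nonneg _
        linarith
      have huniqK : ∀ z ∈ Metric.closedBall u R, ∃! p', p' ∈ S ∧ ‖z - p'‖ = Metric.infDist z S := by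
        intro z hzK
        rw [Metric.mem_closedBall, dist_eq_norm] at hzK
        refine huniq z (hfar x hxX z ?_)
        have htri : ‖x - z‖ ≤ ‖x - u‖ + ‖u - z‖ := norm_sub_le_norm_sub_add_norm_sub _ _ _
        have hxu : ‖x - u‖ = r := by rw [hr, norm_sub_rev]
        have hzu : ‖u - z‖ = ‖z - u‖ := norm_sub_rev _ _
        rw [hxu, hzu] at htri
        rw [hRdef] at hzK
        linarith
      have hmarch := march S hS hSne u R hR0 huniqK (π u) hpS hpd hdpos
      obtain ⟨q, hqS, hqd⟩ := hS.exists_infDist_eq_dist hSne x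
      set dx : ℝ := Metric.infDist x S with hdxdef
      have hdxe : dx < e/3 := h2 x hxX
      have hdx0 : 0 ≤ dx := Metric.infDist_nonneg
      have hxq : ‖x - q‖ = dx := by rw [← dist_eq_norm]; exact hqd.symm
      set w : ℝ := ‖u - q‖ with hwdef
      have hdw : d ≤ w := by
        rw [hd, hwdef, ← dist_eq_norm]
        exact Metric.infDist_le_dist_of_mem hqS
      have hwrd : w ≤ r + dx := by
        rw [hwdef, hr, ← hxq]
        exact norm_sub_le_norm_sub_add_norm_sub u x q
      -- inner product estimates
      have hkey := hmarch q hqS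
      have hJ : d*(d^2 + 2*d*R - w^2) ≤ 2*R*(inner ℝ (u - q) (u - π u) : ℝ) := by
        have hrw : u + (R / d) • (u - π u) - q = (u - q) + (R/d) • (u - π u) := by abel
        rw [hrw] at hkey
        have hsq : (d+R)^2 ≤ ‖(u - q) + (R/d) • (u - π u)‖^2 :=
          pow_le_pow_left₀ (by linarith) hkey 2
        have hexp : ‖(u - q) + (R/d) • (u - π u)‖^2
            = w^2 + 2*(R/d)*(inner ℝ (u - q) (u - π u) : ℝ) + R^2 := by
          rw [norm_add_sq_real, real_inner_smul_right, norm_smul, Real.norm_eq_abs,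
            abs_div, abs_of_nonneg hR0, abs_of_pos hdpos, hpd, ← hwdef]
          have h9 : R/d*d = R := div_mul_cancel₀ R (ne_of_gt hdpos)
          rw [h9]
          ring
        rw [hexp] at hsq
        have hstep : (d+R)^2 - R^2 - w^2 ≤ 2*(R/d)*(inner ℝ (u - q) (u - π u) : ℝ) := by
          linarith
        have hmul := mul_le_mul_of_nonneg_left hstep (le_of_lt hdpos)
        have hced : d*(2*(R/d)*(inner ℝ (u - q) (u - π u) : ℝ))
            = 2*R*(inner ℝ (u - q) (u - π u) : ℝ) := by
          field_simp
        rw [hced] at hmul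
        nlinarith [hmul]
      have hQX : -(dx*d) ≤ (inner ℝ (q - x) (u - π u) : ℝ) := by
        have h2' : |(inner ℝ (q - x) (u - π u) : ℝ)| ≤ ‖q - x‖ * ‖u - π u‖ :=
          abs_real_inner_le_norm _ _
        have h3' : ‖q - x‖ * ‖u - π u‖ = dx * d := by
          rw [norm_sub_rev, hxq, hpd]
        rw [h3'] at h2'
        exact (abs_le.mp h2').1
      have hI : d*(d^2 + 2*d*R - w^2) - 2*R*(dx*d)
          ≤ 2*R*(inner ℝ (u - x) (u - π u) : ℝ) := by
        have hsplit : (inner ℝ (u - x) (u - π u) : ℝ)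
            = (inner ℝ (u - q) (u - π u) : ℝ) + (inner ℝ (q - x) (u - π u) : ℝ) := by
          rw [← inner_add_left]
          have : (u - q) + (q - x) = u - x := by abel
          rw [this]
        rw [hsplit]
        have hco : (0:ℝ) ≤ 2*R := by linarith
        have := mul_le_mul_of_nonneg_left hQX hco
        linarith [hJ, this]
      -- eps y relation
      have hey : 17*e - 17*(ε y) ≤ r + d + (ε y)/4 := by
        have hxy : ‖x - y‖ ≤ r + d + (ε y)/4 := by
          have t1 : ‖x - y‖ ≤ ‖x - u‖ + ‖u - y‖ := norm_sub_le_norm_sub_add_norm_sub _ _ _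
          have t2 : ‖u - y‖ ≤ ‖u - π u‖ + ‖π u - y‖ := norm_sub_le_norm_sub_add_norm_sub _ _ _
          have t3 : ‖x - u‖ = r := by rw [hr, norm_sub_rev]
          have t4 : ‖π u - y‖ < ε y / 4 := by rw [norm_sub_rev]; exact hyp
          rw [t3] at t1
          rw [hpd] at t2
          linarith
        rcases eq_or_ne x y with hxy' | hxy'
        · subst hxy'
          have h0r : (0:ℝ) ≤ r := norm_nonneg _
          have h0d : 0 ≤ d := le_of_lt hdpos
          have hee : e = ε x := he
          linarith [le_of_lt heypos, hee.le, hee.ge]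
        · have habs := h4 x hxX y hyX hxy'
          have h5 : e - ε y ≤ |e - ε y| := le_abs_self _
          have h6 : |e - ε y| < ‖x - y‖ / 17 := habs
          have h7 : ‖x - y‖ / 17 ≤ (r + d + (ε y)/4)/17 := by linarith
          linarith
      set lam : ℝ := t * d with hlam
      have hlam0 : 0 ≤ lam := mul_nonneg ht0 (le_of_lt hdpos)
      have hlamd : lam ≤ d := by
        rw [hlam]
        have h9 := mul_le_mul_of_nonneg_right ht1 (le_of_lt hdpos)
        linarith [h9]
      have hlamkey : 23*lam ≤ 24*d + r - 17*e := by
        have hc : (1-t)*d = d - lam := by rw [hlam]; ring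
        rw [hc] at hcase
        linarith
      -- final computation
      have halg := alg_key e r dx d w lam hepos (norm_nonneg _) hre hdx0 (le_of_lt hdxe)
        hdpos hdw hwrd hlam0 hlamd hlamkey
      rw [hU]
      refine Set.mem_iUnion₂.mpr ⟨x, hxX, ?_⟩
      rw [Metric.mem_ball, dist_eq_norm]
      have hnormsq : ‖t • π u + (1 - t) • u - x‖^2
          = r^2 - 2*t*(inner ℝ (u - x) (u - π u) : ℝ) + lam^2 := by
        rw [hwx, norm_sub_sq_real, real_inner_smul_right, norm_smul, Real.norm_eq_abs,
          abs_of_nonneg ht0, hpd, ← hr, hlam]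
        ring
      have hfinal : R * ‖t • π u + (1 - t) • u - x‖^2 < R * e^2 := by
        have hRpos : 0 < R := by
          rw [hRdef]
          have : 0 ≤ r := norm_nonneg _
          linarith
        have hib : -(2*t*(inner ℝ (u - x) (u - π u) : ℝ))*R
            ≤ -(lam*(d^2 + 2*d*R - w^2)) + 2*lam*dx*R := by
          have hco : 0 ≤ t := ht0
          have hmul := mul_le_mul_of_nonneg_left hI hco
          have hexp : t*(d*(d^2 + 2*d*R - w^2) - 2*R*(dx*d))
              = lam*(d^2 + 2*d*R - w^2) - 2*lam*dx*R := by
            rw [hlam]; ring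
          rw [hexp] at hmul
          nlinarith [hmul]
        have hexpand : R * ‖t • π u + (1 - t) • u - x‖^2
            = R*r^2 + (-(2*t*(inner ℝ (u - x) (u - π u) : ℝ)))*R + R*lam^2 := by
          rw [hnormsq]; ring
        have halg' : R*r^2 - lam*(d^2 + 2*d*R - w^2) + 2*lam*dx*R + R*lam^2 < R*e^2 := by
          have : (5*e - r) = R := by rw [hRdef]
          rw [this] at halg
          nlinarith [halg]
        rw [hexpand]
        linarith [hib, halg']
      have hRpos : 0 < R := by
        rw [hRdef]
        have : 0 ≤ r := norm_nonneg _
        linarith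
      have hsqlt : ‖t • π u + (1 - t) • u - x‖^2 < e^2 :=
        lt_of_mul_lt_mul_left hfinal (le_of_lt hRpos)
      exact lt_of_pow_lt_pow_left₀ 2 (le_of_lt hepos) hsqlt
  refine ⟨hseg, ?_, ?_, ?_⟩
  · have h1c : ContinuousOn (fun p : E × ℝ => π p.1) (U ×ˢ Set.Icc (0:ℝ) 1) :=
      hπcont.comp continuous_fst.continuousOn (fun p hp => hp.1)
    exact (continuous_snd.continuousOn.smul h1c).add
      ((continuousOn_const.sub continuous_snd.continuousOn).smul continuous_fst.continuousOn)
  · intro u hu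
    refine ⟨by simp, by simp, (hπ u hu).1⟩
  · intro p hp t ht
    rw [hπfix p hp, ← add_smul]
    have : t + (1 - t) = 1 := by ring
    rw [this, one_smul]
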